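/- Let R_{S₀} be the even part of a finite Grassmann algebra over ℝ, and let (x, y) ∈ S^{1,0}, i.e., x² + y² = 1, with ε(x) > 0. Then y determines x: there is a unique x ∈ R_{S₀} with ε(x) > 0 and x² = 1 − y², given by Grassmann-analytically continuing √(1−t²); in particular the coordinate projection (x,y) ↦ y is a bijection from {(x,y) ∈ S^{1,0} : ε(x) > 0} onto {y ∈ R_{S₀} : −1 < ε(y) < 1}. -/

import Mathlib

set_option synthInstance.maxHeartbeats 1000000
set_option maxHeartbeats 2000000

/-- The body (coefficient at the empty multi-index) of a Grassmann number. -/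
noncomputable def gBody {L : ℕ} (x : ExteriorAlgebra ℝ (Fin L → ℝ)) : ℝ :=
  ExteriorAlgebra.algebraMapInv x

/-- The soul (nilpotent part) of a Grassmann number. -/
noncomputable def gSoul {L : ℕ} (x : ExteriorAlgebra ℝ (Fin L → ℝ)) :
    ExteriorAlgebra ℝ (Fin L → ℝ) :=
  x - algebraMap ℝ _ (gBody x)

/-- Grassmann analytic continuation of a smooth function f : ℝ → ℝ: the Taylor expansion
of f around the body, evaluated at the nilpotent soul (which vanishes beyond degree L). -/
noncomputable def gExtend {L : ℕ} (f : ℝ → ℝ) (x : ExteriorAlgebra ℝ (Fin L → ℝ)) :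
    ExteriorAlgebra ℝ (Fin L → ℝ) :=
  ∑ k ∈ Finset.range (L + 1), ((deriv^[k] f) (gBody x) / k.factorial) • gSoul x ^ k

/-- The Grassmann sine. -/
noncomputable def gSin {L : ℕ} (x : ExteriorAlgebra ℝ (Fin L → ℝ)) :
    ExteriorAlgebra ℝ (Fin L → ℝ) := gExtend Real.sin x

/-- The Grassmann cosine. -/
noncomputable def gCos {L : ℕ} (x : ExteriorAlgebra ℝ (Fin L → ℝ)) :
    ExteriorAlgebra ℝ (Fin L → ℝ) := gExtend Real.cos x

/-- The even part of the Grassmann algebra. -/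
noncomputable def gEven (L : ℕ) : Submodule ℝ (ExteriorAlgebra ℝ (Fin L → ℝ)) :=
  CliffordAlgebra.evenOdd (0 : QuadraticForm ℝ (Fin L → ℝ)) 0

/-! ### Auxiliary lemmas -/

open ExteriorAlgebra

section CommAux

/-- Newton-iteration approximation to the square root of `1 + n`. -/
lemma sqrt_aux {A : Type*} [CommRing A] [Algebra ℝ A] (n : A) :
    ∀ k : ℕ, ∃ r : A, n ∣ (r - 1) ∧ r ^ 2 - (1 + n) ∈ Ideal.span {n} ^ (k + 1) := by
  intro k
  induction k with
  | zero =>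
    refine ⟨1, by simp, ?_⟩
    have : (1 : A) ^ 2 - (1 + n) = -n := by ring
    rw [this, pow_one]
    exact neg_mem (Ideal.subset_span rfl)
  | succ k ih =>
    obtain ⟨r, hr1, hr2⟩ := ih
    set hh : A := algebraMap ℝ A (1/2) with hhdef
    have h2 : (2 : A) * hh = 1 := by
      rw [hhdef, ← map_ofNat (algebraMap ℝ A) 2, ← map_mul, ← map_one (algebraMap ℝ A)]
      norm_num
    have hne : n ∣ (r ^ 2 - (1 + n)) := by
      have : r ^ 2 - (1 + n) ∈ Ideal.span {n} := by
        have := Ideal.pow_le_pow_right (I := Ideal.span {n})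
          (Nat.one_le_iff_ne_zero.mpr (Nat.succ_ne_zero k))
        simpa [pow_one] using this hr2
      exact (Ideal.mem_span_singleton).mp this
    refine ⟨r - (r ^ 2 - (1 + n)) * hh, ?_, ?_⟩
    · have : r - (r ^ 2 - (1 + n)) * hh - 1 = (r - 1) - (r ^ 2 - (1 + n)) * hh := by ring
      rw [this]
      exact dvd_sub hr1 (Dvd.dvd.mul_right hne _)
    · have key : (r - (r ^ 2 - (1 + n)) * hh) ^ 2 - (1 + n)
          = (r ^ 2 - (1 + n)) * (1 - r) + (r ^ 2 - (1 + n)) * ((r ^ 2 - (1 + n)) * hh ^ 2) := by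
        linear_combination (-(r * (r ^ 2 - (1 + n)))) * h2
      rw [key, pow_succ]
      refine add_mem (Ideal.mul_mem_mul hr2 ?_) (Ideal.mul_mem_mul hr2 ?_)
      · exact Ideal.mem_span_singleton.mpr (by simpa using (dvd_neg.mpr hr1))
      · exact Ideal.mem_span_singleton.mpr (Dvd.dvd.mul_right hne _)

/-- A polynomial square root of `1 + X` modulo `X ^ m`. -/
lemma poly_sqrt (m : ℕ) : ∃ p : Polynomial ℝ, (Polynomial.X ∣ p - 1) ∧
    (Polynomial.X ^ (m + 1) ∣ p ^ 2 - (1 + Polynomial.X)) := by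
  obtain ⟨p, h1, h2⟩ := sqrt_aux (Polynomial.X : Polynomial ℝ) m
  refine ⟨p, h1, ?_⟩
  rw [Ideal.span_singleton_pow] at h2
  exact Ideal.mem_span_singleton.mp h2

end CommAux

section Grading

variable {L : ℕ}

/-- The `i`-th graded piece of the exterior algebra. -/
noncomputable def gP (L : ℕ) (i : ℕ) : Submodule ℝ (ExteriorAlgebra ℝ (Fin L → ℝ)) :=
  (LinearMap.range (ExteriorAlgebra.ι ℝ (M := Fin L → ℝ))) ^ i

/-- The augmentation submodule (degrees ≥ 1). -/
noncomputable def gK (L : ℕ) : Submodule ℝ (ExteriorAlgebra ℝ (Fin L → ℝ)) :=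
  ⨆ i : ℕ, gP L (i + 1)

lemma gP_mul (i j : ℕ) : gP L i * gP L j = gP L (i + j) := (pow_add _ i j).symm

lemma gP_top_eq_bot : gP L (L + 1) = ⊥ := by
  rw [eq_bot_iff]
  have hspan : gP L (L + 1) = Submodule.span ℝ (Set.range (ιMulti ℝ (L + 1))) :=
    (ιMulti_span_fixedDegree ℝ (L + 1)).symm
  rw [hspan, Submodule.span_le]
  rintro _ ⟨v, rfl⟩
  have hdep : ¬ LinearIndependent ℝ v := by
    intro hli
    have := hli.fintype_card_le_finrank
    simp [Module.finrank_fin_fun] at this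
  simp [AlternatingMap.map_linearDependent _ v hdep]

lemma gK_pow (m : ℕ) : gK L ^ (m + 1) ≤ ⨆ i : ℕ, gP L (i + m + 1) := by
  induction m with
  | zero => rw [pow_one, gK]
  | succ m ih =>
    rw [pow_succ]
    calc gK L ^ (m + 1) * gK L ≤ (⨆ i : ℕ, gP L (i + m + 1)) * (⨆ j : ℕ, gP L (j + 1)) :=
          mul_le_mul' ih (le_refl _)
      _ ≤ ⨆ i : ℕ, gP L (i + (m + 1) + 1) := by
          rw [Submodule.iSup_mul]
          refine iSup_le fun i => ?_
          rw [Submodule.mul_iSup]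
          refine iSup_le fun j => ?_
          rw [gP_mul]
          exact le_iSup_of_le (i + j)
            (by rw [show i + j + (m + 1) + 1 = (i + m + 1) + (j + 1) by ring])

lemma gK_mul : gK L * gK L ≤ gK L := by
  have h := gK_pow (L := L) 1
  rw [pow_succ, pow_one] at h
  exact h.trans (iSup_le fun i => le_iSup_of_le (i + 1) (le_refl _))

lemma gK_pow_top : gK L ^ (L + 1) = ⊥ := by
  rw [eq_bot_iff]
  refine (gK_pow L).trans (iSup_le fun i => ?_)
  have : gP L (i + L + 1) = ⊥ := by
    rw [show i + L + 1 = (L + 1) + i by ring, ← gP_mul, gP_top_eq_bot, Submodule.bot_mul]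
  rw [this]

lemma mem_sup_decomp (x : ExteriorAlgebra ℝ (Fin L → ℝ)) : x ∈ gP L 0 ⊔ gK L := by
  induction x using ExteriorAlgebra.induction with
  | algebraMap r =>
      refine Submodule.mem_sup_left ?_
      simp only [gP, pow_zero]
      exact Submodule.algebraMap_mem r
  | ι m =>
      refine Submodule.mem_sup_right ?_
      refine (le_iSup (fun i => gP L (i + 1)) 0) ?_
      simp only [gP, zero_add, pow_one]
      exact LinearMap.mem_range_self _ m
  | mul a b ha hb =>
      have hmul : (gP L 0 ⊔ gK L) * (gP L 0 ⊔ gK L) ≤ gP L 0 ⊔ gK L := by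
        rw [Submodule.sup_mul, Submodule.mul_sup, Submodule.mul_sup]
        have h0 : gP L 0 = 1 := pow_zero _
        refine sup_le (sup_le ?_ ?_) (sup_le ?_ ?_)
        · rw [h0, one_mul]; exact le_sup_left
        · rw [h0, one_mul]; exact le_sup_right
        · rw [h0, mul_one]; exact le_sup_right
        · exact le_trans gK_mul le_sup_right
      exact hmul (Submodule.mul_mem_mul ha hb)
  | add a b ha hb => exact add_mem ha hb

lemma gBody_eq_zero_of_mem_gK {x : ExteriorAlgebra ℝ (Fin L → ℝ)} (hx : x ∈ gK L) :
    gBody x = 0 := by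
  have : gK L ≤ LinearMap.ker (ExteriorAlgebra.algebraMapInv (M := Fin L → ℝ)).toLinearMap := by
    refine iSup_le fun i => ?_
    rw [show i + 1 = 1 + i by ring, ← gP_mul]
    refine Submodule.mul_le.mpr fun m hm p _ => ?_
    simp only [gP, pow_one] at hm
    obtain ⟨v, rfl⟩ := hm
    simp [LinearMap.mem_ker, map_mul, ExteriorAlgebra.algebraMapInv]
  simpa [gBody] using this hx

lemma soul_mem_gK (x : ExteriorAlgebra ℝ (Fin L → ℝ)) :
    x - algebraMap ℝ _ (gBody x) ∈ gK L := by
  obtain ⟨a, ha, k, hk, hx⟩ := Submodule.mem_sup.mp (mem_sup_decomp x)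
  simp only [gP, pow_zero] at ha
  obtain ⟨r, rfl⟩ := (Submodule.mem_one).mp ha
  have hb : gBody x = r := by
    have : gBody ((algebraMap ℝ _ r) + k) = r + gBody k := by
      simp [gBody, map_add, ExteriorAlgebra.algebraMap_leftInverse _ r]
    rw [hx] at this
    rw [this, gBody_eq_zero_of_mem_gK hk, add_zero]
  rw [hb, ← hx]
  simpa using hk

lemma soul_pow_eq_zero (x : ExteriorAlgebra ℝ (Fin L → ℝ)) :
    (x - algebraMap ℝ _ (gBody x)) ^ (L + 1) = 0 := by
  have h := Submodule.pow_mem_pow _ (soul_mem_gK x) (L + 1)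
  rw [gK_pow_top] at h
  simpa using h

end Grading

section Commutation

variable {L : ℕ}

lemma ι_anticomm (m₁ m₂ : Fin L → ℝ) :
    ExteriorAlgebra.ι ℝ m₁ * ExteriorAlgebra.ι ℝ m₂
      = -(ExteriorAlgebra.ι ℝ m₂ * ExteriorAlgebra.ι ℝ m₁) :=
  eq_neg_of_add_eq_zero_left (ExteriorAlgebra.ι_add_mul_swap m₁ m₂)

lemma ι_mul_ι_commute (m₁ m₂ : Fin L → ℝ) (b : ExteriorAlgebra ℝ (Fin L → ℝ)) :
    Commute (ExteriorAlgebra.ι ℝ m₁ * ExteriorAlgebra.ι ℝ m₂) b := by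
  induction b using ExteriorAlgebra.induction with
  | algebraMap r => exact Algebra.commute_algebraMap_right r _
  | ι v =>
      show _ = _
      calc ExteriorAlgebra.ι ℝ m₁ * ExteriorAlgebra.ι ℝ m₂ * ExteriorAlgebra.ι ℝ v
          = ExteriorAlgebra.ι ℝ m₁ * (ExteriorAlgebra.ι ℝ m₂ * ExteriorAlgebra.ι ℝ v) := by
            rw [mul_assoc]
        _ = ExteriorAlgebra.ι ℝ m₁ * -(ExteriorAlgebra.ι ℝ v * ExteriorAlgebra.ι ℝ m₂) := by
            rw [ι_anticomm m₂ v]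
        _ = -(ExteriorAlgebra.ι ℝ m₁ * ExteriorAlgebra.ι ℝ v) * ExteriorAlgebra.ι ℝ m₂ := by
            rw [mul_neg, neg_mul, mul_assoc]
        _ = (ExteriorAlgebra.ι ℝ v * ExteriorAlgebra.ι ℝ m₁) * ExteriorAlgebra.ι ℝ m₂ := by
            rw [ι_anticomm m₁ v, neg_neg]
        _ = ExteriorAlgebra.ι ℝ v * (ExteriorAlgebra.ι ℝ m₁ * ExteriorAlgebra.ι ℝ m₂) := by
            rw [mul_assoc]
  | mul a b ha hb => exact ha.mul_right hb
  | add a b ha hb => exact ha.add_right hb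

lemma even_commute {x : ExteriorAlgebra ℝ (Fin L → ℝ)}
    (hx : x ∈ CliffordAlgebra.evenOdd (0 : QuadraticForm ℝ (Fin L → ℝ)) 0)
    (b : ExteriorAlgebra ℝ (Fin L → ℝ)) : Commute x b := by
  induction x, hx using CliffordAlgebra.even_induction with
  | algebraMap r => exact Algebra.commute_algebraMap_left r b
  | add a c _ _ ha hc => exact ha.add_left hc
  | ι_mul_ι_mul m₁ m₂ a _ ha => exact (ι_mul_ι_commute m₁ m₂ b).mul_left ha

end Commutation

section Main

variable {L : ℕ}

lemma gBody_algebraMap (r : ℝ) : gBody (algebraMap ℝ (ExteriorAlgebra ℝ (Fin L → ℝ)) r) = r :=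
  ExteriorAlgebra.algebraMap_leftInverse _ r

lemma isUnit_of_gBody_ne_zero {x : ExteriorAlgebra ℝ (Fin L → ℝ)} (h : gBody x ≠ 0) :
    IsUnit x := by
  have hnil : IsNilpotent (x - algebraMap ℝ _ (gBody x)) := ⟨L + 1, soul_pow_eq_zero x⟩
  have hu : IsUnit (algebraMap ℝ (ExteriorAlgebra ℝ (Fin L → ℝ)) (gBody x)) :=
    (isUnit_iff_ne_zero.mpr h).map (algebraMap ℝ _)
  have := hnil.isUnit_add_left_of_commute hu (Algebra.commute_algebraMap_right _ _)
  simpa using this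

lemma mem_gEven_one : (1 : ExteriorAlgebra ℝ (Fin L → ℝ)) ∈ gEven L :=
  Submodule.one_le.mp (CliffordAlgebra.one_le_evenOdd_zero _)

lemma mem_gEven_mul {x y : ExteriorAlgebra ℝ (Fin L → ℝ)}
    (hx : x ∈ gEven L) (hy : y ∈ gEven L) : x * y ∈ gEven L := by
  have h := CliffordAlgebra.evenOdd_mul_le (0 : QuadraticForm ℝ (Fin L → ℝ)) 0 0
    (Submodule.mul_mem_mul hx hy)
  simpa [gEven] using h

lemma mem_gEven_algebraMap (r : ℝ) :
    algebraMap ℝ (ExteriorAlgebra ℝ (Fin L → ℝ)) r ∈ gEven L := by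
  have : algebraMap ℝ (ExteriorAlgebra ℝ (Fin L → ℝ)) r = r • 1 :=
    Algebra.algebraMap_eq_smul_one r
  rw [this]
  exact Submodule.smul_mem _ r mem_gEven_one

/-- Existence of an even square root with positive body. -/
lemma exists_even_sqrt {a : ExteriorAlgebra ℝ (Fin L → ℝ)}
    (ha : a ∈ gEven L) (hc : 0 < gBody a) :
    ∃ x : ExteriorAlgebra ℝ (Fin L → ℝ), x ∈ gEven L ∧ 0 < gBody x ∧ x ^ 2 = a := by
  set c : ℝ := gBody a with hcdef
  set s : ExteriorAlgebra ℝ (Fin L → ℝ) := a - algebraMap ℝ _ c with hsdef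
  have hsbody : ExteriorAlgebra.algebraMapInv s = 0 := by
    have : gBody s = gBody a - c := by simp [hsdef, gBody, map_sub, gBody_algebraMap]
    have h2 : gBody s = 0 := by rw [this, hcdef]; ring
    exact h2
  have hsnil : s ^ (L + 1) = 0 := soul_pow_eq_zero a
  set n : ExteriorAlgebra ℝ (Fin L → ℝ) := c⁻¹ • s with hndef
  have hnnil : n ^ (L + 1) = 0 := by rw [hndef, smul_pow, hsnil, smul_zero]
  have hnbody : ExteriorAlgebra.algebraMapInv n = 0 := by
    simp [hndef, gBody, map_smul, smul_eq_mul, hsbody]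
  obtain ⟨p, hp1, hp2⟩ := poly_sqrt L
  set r : ExteriorAlgebra ℝ (Fin L → ℝ) := Polynomial.aeval n p with hrdef
  have hr2 : r ^ 2 = 1 + n := by
    obtain ⟨q, hq⟩ := hp2
    have := congrArg (Polynomial.aeval n) hq
    simp only [map_sub, map_add, map_pow, map_mul, Polynomial.aeval_X, Polynomial.aeval_one,
      map_one] at this
    rw [hnnil, zero_mul, sub_eq_zero] at this
    exact this
  have hrbody : gBody r = 1 := by
    obtain ⟨q, hq⟩ := hp1
    have := congrArg (Polynomial.aeval n) hq
    simp only [map_sub, map_mul, Polynomial.aeval_X, map_one] at this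
    have hb := congrArg (ExteriorAlgebra.algebraMapInv (M := Fin L → ℝ)) this
    simp only [map_sub, map_mul, map_one, hnbody, zero_mul] at hb
    have : ExteriorAlgebra.algebraMapInv r = 1 := by
      have := sub_eq_zero.mp hb
      simpa [hrdef] using this
    exact this
  have hneven : n ∈ gEven L := by
    refine Submodule.smul_mem _ _ (Submodule.sub_mem _ ha (mem_gEven_algebraMap c))
  have hreven : r ∈ gEven L := by
    have hmem : r ∈ Algebra.adjoin ℝ {n} := by
      rw [Algebra.adjoin_singleton_eq_range_aeval]
      exact ⟨p, rfl⟩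
    have hle : Algebra.adjoin ℝ {n} ≤ CliffordAlgebra.even (0 : QuadraticForm ℝ (Fin L → ℝ)) := by
      refine Algebra.adjoin_le ?_
      rw [Set.singleton_subset_iff]
      show n ∈ CliffordAlgebra.even (0 : QuadraticForm ℝ (Fin L → ℝ))
      rw [← Subalgebra.mem_toSubmodule, CliffordAlgebra.even_toSubmodule]
      exact hneven
    have := hle hmem
    rw [← Subalgebra.mem_toSubmodule, CliffordAlgebra.even_toSubmodule] at this
    exact this
  refine ⟨Real.sqrt c • r, Submodule.smul_mem _ _ hreven, ?_, ?_⟩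
  · have : gBody (Real.sqrt c • r) = Real.sqrt c * gBody r := by
      simp [gBody, map_smul, smul_eq_mul]
    rw [this, hrbody, mul_one]
    exact Real.sqrt_pos.mpr hc
  · have hcne : c ≠ 0 := ne_of_gt hc
    calc (Real.sqrt c • r) ^ 2 = (Real.sqrt c ^ 2) • r ^ 2 := by
          rw [smul_pow]
      _ = c • (1 + n) := by rw [Real.sq_sqrt hc.le, hr2]
      _ = c • (1 : ExteriorAlgebra ℝ (Fin L → ℝ)) + c • n := by rw [smul_add]
      _ = algebraMap ℝ _ c + s := by
          rw [hndef, smul_smul, mul_inv_cancel₀ hcne, one_smul,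
            ← Algebra.algebraMap_eq_smul_one]
      _ = a := by rw [hsdef]; abel

/-- Uniqueness of the even square root with positive body. -/
lemma even_sqrt_unique {a x₁ x₂ : ExteriorAlgebra ℝ (Fin L → ℝ)}
    (h₁e : x₁ ∈ gEven L) (h₁b : 0 < gBody x₁) (h₁ : x₁ ^ 2 = a)
    (_h₂e : x₂ ∈ gEven L) (h₂b : 0 < gBody x₂) (h₂ : x₂ ^ 2 = a) : x₁ = x₂ := by
  have hcomm : Commute x₁ x₂ := even_commute h₁e x₂
  have hz : (x₁ - x₂) * (x₁ + x₂) = 0 := by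
    have hexp : (x₁ - x₂) * (x₁ + x₂) = x₁ ^ 2 - x₂ ^ 2 + (x₁ * x₂ - x₂ * x₁) := by
      noncomm_ring
    rw [hexp, hcomm.eq, h₁, h₂]
    simp
  have hub : gBody (x₁ + x₂) ≠ 0 := by
    have : gBody (x₁ + x₂) = gBody x₁ + gBody x₂ := by simp [gBody, map_add]
    rw [this]; positivity
  have hu : IsUnit (x₁ + x₂) := isUnit_of_gBody_ne_zero hub
  have := hu.mul_right_cancel (by rw [hz, zero_mul] : (x₁ - x₂) * (x₁ + x₂) = 0 * (x₁ + x₂))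
  exact sub_eq_zero.mp this

end Main

/-- On the supercircle, the positive-body coordinate x is uniquely determined by y:
there is a unique even x with positive body and x² = 1 − y²; consequently the projection
(x, y) ↦ y is a bijection from {(x,y) ∈ S^{1,0} : ε(x) > 0} onto
{y even : −1 < ε(y) < 1}. -/
theorem stmt_17 (L : ℕ) :
    (∀ y : ExteriorAlgebra ℝ (Fin L → ℝ), y ∈ gEven L → -1 < gBody y → gBody y < 1 →
      ∃! x : ExteriorAlgebra ℝ (Fin L → ℝ),
        x ∈ gEven L ∧ 0 < gBody x ∧ x ^ 2 = 1 - y ^ 2) ∧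
    Set.BijOn (fun p : ExteriorAlgebra ℝ (Fin L → ℝ) × ExteriorAlgebra ℝ (Fin L → ℝ) => p.2)
      {p | p.1 ∈ gEven L ∧ p.2 ∈ gEven L ∧ p.1 ^ 2 + p.2 ^ 2 = 1 ∧ 0 < gBody p.1}
      {y | y ∈ gEven L ∧ -1 < gBody y ∧ gBody y < 1} := by
  have hexu : ∀ y : ExteriorAlgebra ℝ (Fin L → ℝ), y ∈ gEven L → -1 < gBody y → gBody y < 1 →
      ∃! x : ExteriorAlgebra ℝ (Fin L → ℝ),
        x ∈ gEven L ∧ 0 < gBody x ∧ x ^ 2 = 1 - y ^ 2 := by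
    intro y hy hy1 hy2
    have ha_even : (1 : ExteriorAlgebra ℝ (Fin L → ℝ)) - y ^ 2 ∈ gEven L := by
      refine Submodule.sub_mem _ mem_gEven_one ?_
      rw [sq]
      exact mem_gEven_mul hy hy
    have hbody : gBody ((1 : ExteriorAlgebra ℝ (Fin L → ℝ)) - y ^ 2) = 1 - gBody y ^ 2 := by
      simp [gBody, map_sub, map_pow, map_one]
    have hc : 0 < gBody ((1 : ExteriorAlgebra ℝ (Fin L → ℝ)) - y ^ 2) := by
      rw [hbody]; nlinarith
    obtain ⟨x, hxe, hxb, hx2⟩ := exists_even_sqrt ha_even hc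
    refine ⟨x, ⟨hxe, hxb, hx2⟩, ?_⟩
    rintro z ⟨hze, hzb, hz2⟩
    exact even_sqrt_unique hze hzb hz2 hxe hxb hx2
  refine ⟨hexu, ?_, ?_, ?_⟩
  · -- MapsTo
    rintro ⟨x, y⟩ ⟨hxe, hye, hsum, hxb⟩
    have hb : gBody x ^ 2 + gBody y ^ 2 = 1 := by
      have := congrArg gBody hsum
      simpa [gBody, map_add, map_pow, map_one] using this
    exact ⟨hye, by nlinarith, by nlinarith⟩
  · -- InjOn
    rintro ⟨x₁, y₁⟩ ⟨hx₁e, hy₁e, hsum₁, hx₁b⟩ ⟨x₂, y₂⟩ ⟨hx₂e, hy₂e, hsum₂, hx₂b⟩ h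
    simp only at h
    subst h
    have h₁ : x₁ ^ 2 = 1 - y₁ ^ 2 := eq_sub_of_add_eq hsum₁
    have h₂ : x₂ ^ 2 = 1 - y₁ ^ 2 := eq_sub_of_add_eq hsum₂
    have : x₁ = x₂ := even_sqrt_unique hx₁e hx₁b h₁ hx₂e hx₂b h₂
    simp [this]
  · -- SurjOn
    rintro y ⟨hye, hy1, hy2⟩
    obtain ⟨x, ⟨hxe, hxb, hx2⟩, _⟩ := hexu y hye hy1 hy2
    refine ⟨(x, y), ⟨hxe, hye, ?_, hxb⟩, rfl⟩
    rw [hx2]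
    abel
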